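/- Let 0 < α < β < 1 and set k(t) = g_{1−β+α}(t) + g_{1−β}(t) and l(t) = t^{β−1} E_{α,β}(−t^α) for t > 0. Then (k ∗ l)(t) = 1 for all t > 0; that is, (k,l) form a Sonine pair. -/

import Mathlib

open MeasureTheory Set

/-- Laplace convolution on `(0, ∞)`: `(f ∗ g)(t) = ∫_0^t f(t−τ) g(τ) dτ`. -/
noncomputable def lconv (f g : ℝ → ℝ) (t : ℝ) : ℝ := ∫ τ in (0:ℝ)..t, f (t - τ) * g τ

/-- `g μ t = t^(μ-1)/Γ(μ)`. -/
noncomputable def g (μ t : ℝ) : ℝ := t ^ (μ - 1) / Real.Gamma μ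

/-- Two-parameter Mittag-Leffler function `E_{α,β}(x) = ∑_{k=0}^∞ x^k/Γ(α k + β)`. -/
noncomputable def mittagLeffler (α β x : ℝ) : ℝ := ∑' k : ℕ, x ^ k / Real.Gamma (α * k + β)

namespace SonineAux

lemma betaII {p q t : ℝ} (hp : -1 < p) (hq : -1 < q) (ht : 0 < t) :
    IntervalIntegrable (fun τ : ℝ => (t - τ) ^ p * τ ^ q) volume 0 t := by
  have h2 : (0:ℝ) < t / 2 := by linarith
  have A : IntervalIntegrable (fun τ : ℝ => (t - τ) ^ p * τ ^ q) volume 0 (t / 2) := by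
    refine (intervalIntegral.intervalIntegrable_rpow' hq).continuousOn_mul ?_
    refine ContinuousOn.rpow_const (continuous_const.sub continuous_id).continuousOn ?_
    intro x hx
    rw [uIcc_of_le h2.le] at hx
    exact Or.inl (ne_of_gt (by nlinarith [hx.2] : (0:ℝ) < t - x))
  have B : IntervalIntegrable (fun τ : ℝ => (t - τ) ^ p * τ ^ q) volume (t / 2) t := by
    have h1 : IntervalIntegrable (fun τ : ℝ => (t - τ) ^ p) volume (t / 2) t := by
      have h0 := (intervalIntegral.intervalIntegrable_rpow' hp (a := t / 2) (b := 0)).comp_sub_left t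
      have e1 : t - t / 2 = t / 2 := by ring
      have e2 : t - 0 = t := by ring
      rwa [e1, e2] at h0
    refine h1.mul_continuousOn ?_
    refine ContinuousOn.rpow_const continuousOn_id ?_
    intro x hx
    rw [uIcc_of_le (by linarith : t / 2 ≤ t)] at hx
    exact Or.inl (ne_of_gt (show (0:ℝ) < id x by simp only [id_eq]; nlinarith [hx.1]))
  exact A.trans B

lemma betaIV {p q t : ℝ} (hp : -1 < p) (hq : -1 < q) (ht : 0 < t) :
    ∫ τ in (0:ℝ)..t, (t - τ) ^ p * τ ^ q =
      Real.Gamma (q + 1) * Real.Gamma (p + 1) / Real.Gamma (p + q + 2) * t ^ (p + q + 1) := by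
  have hq1 : (0:ℝ) < q + 1 := by linarith
  have hp1 : (0:ℝ) < p + 1 := by linarith
  have hpq : (0:ℝ) < p + q + 2 := by linarith
  -- complex beta
  have hG := Complex.Gamma_mul_Gamma_eq_betaIntegral
      (s := ((q + 1 : ℝ) : ℂ)) (t := ((p + 1 : ℝ) : ℂ))
      (by simpa using hq1) (by simpa using hp1)
  have hsum : ((q + 1 : ℝ) : ℂ) + ((p + 1 : ℝ) : ℂ) = ((p + q + 2 : ℝ) : ℂ) := by
    push_cast; ring
  rw [hsum, Complex.Gamma_ofReal, Complex.Gamma_ofReal, Complex.Gamma_ofReal] at hG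
  have hGne : ((Real.Gamma (p + q + 2) : ℝ) : ℂ) ≠ 0 := by
    simpa using (Real.Gamma_pos_of_pos hpq).ne'
  have hB : Complex.betaIntegral ((q + 1 : ℝ) : ℂ) ((p + 1 : ℝ) : ℂ) =
      ((Real.Gamma (q + 1) : ℂ) * (Real.Gamma (p + 1) : ℂ) / (Real.Gamma (p + q + 2) : ℂ)) := by
    rw [eq_div_iff hGne, hG]
    ring
  have hc := Complex.betaIntegral_scaled ((q + 1 : ℝ) : ℂ) ((p + 1 : ℝ) : ℂ) ht
  rw [hB] at hc
  -- rewrite LHS of hc as ofReal of the real integral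
  have hL : (∫ x : ℝ in (0:ℝ)..t, (x : ℂ) ^ (((q + 1 : ℝ) : ℂ) - 1) *
        ((t : ℂ) - x) ^ (((p + 1 : ℝ) : ℂ) - 1)) =
      ((∫ τ in (0:ℝ)..t, (t - τ) ^ p * τ ^ q : ℝ) : ℂ) := by
    rw [show (∫ τ in (0:ℝ)..t, (t - τ) ^ p * τ ^ q : ℝ) =
        ∫ τ in (0:ℝ)..t, τ ^ q * (t - τ) ^ p from
      intervalIntegral.integral_congr fun x _ => mul_comm _ _]
    rw [← intervalIntegral.integral_ofReal]
    refine intervalIntegral.integral_congr fun x hx => ?_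
    rw [uIcc_of_le ht.le] at hx
    have hx0 : (0:ℝ) ≤ x := hx.1
    have hx1 : (0:ℝ) ≤ t - x := by linarith [hx.2]
    push_cast
    rw [Complex.ofReal_cpow hx0, Complex.ofReal_cpow hx1]
    push_cast
    ring_nf
  rw [hL] at hc
  -- rewrite RHS cpow as ofReal
  have hR : ((t : ℂ)) ^ (((q + 1 : ℝ) : ℂ) + ((p + 1 : ℝ) : ℂ) - 1) =
      ((t ^ (p + q + 1) : ℝ) : ℂ) := by
    rw [Complex.ofReal_cpow ht.le]
    push_cast
    ring_nf
  rw [hR] at hc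
  have hfin : (∫ τ in (0:ℝ)..t, (t - τ) ^ p * τ ^ q) =
      t ^ (p + q + 1) * (Real.Gamma (q + 1) * Real.Gamma (p + 1) / Real.Gamma (p + q + 2)) := by
    have h2 : ((t ^ (p + q + 1) * (Real.Gamma (q + 1) * Real.Gamma (p + 1) /
        Real.Gamma (p + q + 2)) : ℝ) : ℂ) =
        (t ^ (p + q + 1) : ℝ) * ((Real.Gamma (q + 1) : ℂ) * (Real.Gamma (p + 1) : ℂ) /
          (Real.Gamma (p + q + 2) : ℂ)) := by
      push_cast; ring
    exact_mod_cast hc.trans h2.symm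
  exact hfin.trans (by ring)

lemma g_conv_int {μ ν : ℝ} (hμ : 0 < μ) (hν : 0 < ν) {t : ℝ} (ht : 0 < t) :
    IntervalIntegrable (fun τ : ℝ => g μ (t - τ) * g ν τ) volume 0 t := by
  have hfun : (fun τ : ℝ => g μ (t - τ) * g ν τ) =
      fun τ : ℝ => (Real.Gamma μ * Real.Gamma ν)⁻¹ * ((t - τ) ^ (μ - 1) * τ ^ (ν - 1)) := by
    funext τ; simp only [g]; ring
  rw [hfun]
  exact (betaII (by linarith) (by linarith) ht).const_mul _

lemma g_conv {μ ν : ℝ} (hμ : 0 < μ) (hν : 0 < ν) {t : ℝ} (ht : 0 < t) :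
    ∫ τ in (0:ℝ)..t, g μ (t - τ) * g ν τ = g (μ + ν) t := by
  have hμ0 := (Real.Gamma_pos_of_pos hμ).ne'
  have hν0 := (Real.Gamma_pos_of_pos hν).ne'
  have hfun : (fun τ : ℝ => g μ (t - τ) * g ν τ) =
      fun τ : ℝ => (Real.Gamma μ * Real.Gamma ν)⁻¹ * ((t - τ) ^ (μ - 1) * τ ^ (ν - 1)) := by
    funext τ; simp only [g]; ring
  rw [hfun, intervalIntegral.integral_const_mul,
    betaIV (by linarith) (by linarith) ht]
  have e1 : ν - 1 + 1 = ν := by ring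
  have e2 : μ - 1 + 1 = μ := by ring
  have e3 : μ - 1 + (ν - 1) + 2 = μ + ν := by ring
  have e4 : μ - 1 + (ν - 1) + 1 = μ + ν - 1 := by ring
  rw [e1, e2, e3, e4, g]
  field_simp

lemma summable_gamma_aux {a c : ℝ} (ha : 0 < a) (hc : 1 ≤ c) {y : ℝ} (hy : 0 ≤ y) :
    Summable (fun n : ℕ => y ^ n / Real.Gamma (a * n + c)) := by
  set z := max y 1 with hzdef
  have hz1 : (1:ℝ) ≤ z := le_max_right _ _
  have hyz : y ≤ z := le_max_left _ _
  have hz0 : (0:ℝ) < 2 * z := by linarith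
  set q := (2 * z) ^ (1 / a : ℝ) with hqdef
  have hq1 : (1:ℝ) ≤ q := Real.one_le_rpow (by linarith) (by positivity)
  have hq0 : (0:ℝ) < q := by linarith
  have hqa : q ^ (a : ℝ) = 2 * z := by
    rw [hqdef, ← Real.rpow_mul hz0.le, one_div, inv_mul_cancel₀ ha.ne', Real.rpow_one]
  set C := Real.exp q with hCdef
  have hC0 : 0 < C := Real.exp_pos q
  set N := ⌈2 / a⌉₊ with hNdef
  have key : ∀ n : ℕ, y ^ n / Real.Gamma (a * n + c) ≤ (C * q ^ 2) * ((1/2) ^ n) ∨ n < N := by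
    intro n
    rcases lt_or_ge n N with h | h
    · exact Or.inr h
    left
    have han : (2:ℝ) ≤ a * n := by
      have h1 : (2 / a : ℝ) ≤ N := Nat.le_ceil _
      have h2 : (N:ℝ) ≤ n := Nat.cast_le.mpr h
      calc (2:ℝ) = a * (2 / a) := by field_simp
        _ ≤ a * n := by nlinarith
    have hanc : (0:ℝ) < a * n + c := by linarith
    set m := ⌊a * (n:ℝ)⌋₊ with hmdef
    have hm2 : 2 ≤ m := Nat.le_floor (by exact_mod_cast han)
    have hm1 : 1 ≤ m := by omega
    have hmle : (m:ℝ) ≤ a * n := Nat.floor_le (by linarith)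
    have hmgt : a * (n:ℝ) - 1 < m := Nat.sub_one_lt_floor _
    -- Gamma lower bound via factorial
    have hGam : Real.Gamma ((m:ℝ)) ≤ Real.Gamma (a * n + c) := by
      apply Real.Gamma_strictMonoOn_Ici.monotoneOn
      · exact mem_Ici.mpr (by exact_mod_cast hm2)
      · exact mem_Ici.mpr (by linarith)
      · linarith
    have hGm : Real.Gamma ((m:ℝ)) = Nat.factorial (m - 1) := by
      have : ((m:ℝ)) = ((m - 1 : ℕ) : ℝ) + 1 := by
        push_cast [Nat.cast_sub hm1]; ring
      rw [this, Real.Gamma_nat_eq_factorial]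
    have hfac : (q : ℝ) ^ (m - 1 : ℕ) / Nat.factorial (m - 1) ≤ C :=
      Real.pow_div_factorial_le_exp (x := q) hq0.le (m - 1)
    have hfacpos : (0:ℝ) < (Nat.factorial (m - 1) : ℝ) := by positivity
    have hqm : q ^ (a * (n:ℝ) - 2) ≤ (q:ℝ) ^ (m - 1 : ℕ) := by
      rw [← Real.rpow_natCast q (m - 1)]
      apply Real.rpow_le_rpow_of_exponent_le hq1
      push_cast [Nat.cast_sub hm1]
      linarith
    have hGlow : q ^ (a * (n:ℝ) - 2) / C ≤ Real.Gamma (a * n + c) := by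
      have h1 : (q:ℝ) ^ (m - 1 : ℕ) / C ≤ (Nat.factorial (m - 1) : ℝ) := by
        rw [div_le_iff₀ hC0]
        calc (q:ℝ) ^ (m - 1 : ℕ) = ((q:ℝ) ^ (m-1:ℕ) / Nat.factorial (m-1)) * Nat.factorial (m-1) := by field_simp
          _ ≤ C * Nat.factorial (m-1) := by
              apply mul_le_mul_of_nonneg_right hfac hfacpos.le
          _ = (Nat.factorial (m-1) : ℝ) * C := by ring
      calc q ^ (a * (n:ℝ) - 2) / C ≤ (q:ℝ) ^ (m - 1 : ℕ) / C := by gcongr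
        _ ≤ (Nat.factorial (m - 1) : ℝ) := h1
        _ = Real.Gamma ((m:ℝ)) := hGm.symm
        _ ≤ Real.Gamma (a * n + c) := hGam
    have hqpos : (0:ℝ) < q ^ (a * (n:ℝ) - 2) / C := by positivity
    have hqan : q ^ (a * (n:ℝ)) = (2 * z) ^ n := by
      rw [show a * (n:ℝ) = a * (n:ℝ) from rfl, Real.rpow_mul hq0.le, hqa,
        Real.rpow_natCast]
    have heq : q ^ (a * (n:ℝ) - 2) = (2 * z) ^ n / q ^ 2 := by
      rw [show a * (n:ℝ) - 2 = a * (n:ℝ) + (-2 : ℝ) from by ring,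
        Real.rpow_add hq0, hqan]
      rw [show ((-2:ℝ)) = -(2:ℝ) from rfl, Real.rpow_neg hq0.le]
      rw [show ((2:ℝ)) = ((2:ℕ):ℝ) from by norm_num, Real.rpow_natCast]
      ring
    have hhalf : y / (2 * z) ≤ 1 / 2 := by
      rw [div_le_div_iff₀ hz0 two_pos]; nlinarith
    calc y ^ n / Real.Gamma (a * n + c) ≤ y ^ n / (q ^ (a * (n:ℝ) - 2) / C) := by
          gcongr
      _ = C * q ^ 2 * (y ^ n / (2 * z) ^ n) := by rw [heq]; field_simp
      _ ≤ C * q ^ 2 * ((1/2 : ℝ) ^ n) := by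
          apply mul_le_mul_of_nonneg_left _ (by positivity)
          calc y ^ n / (2 * z) ^ n = (y / (2 * z)) ^ n := (div_pow y (2 * z) n).symm
            _ ≤ (1/2 : ℝ) ^ n := pow_le_pow_left₀ (by positivity) hhalf n
      _ = (C * q ^ 2) * ((1/2) ^ n) := by ring
  have hnn : ∀ n : ℕ, 0 ≤ y ^ n / Real.Gamma (a * n + c) := fun n =>
    div_nonneg (pow_nonneg hy n) (Real.Gamma_pos_of_pos (by positivity)).le
  have hs : Summable (fun n : ℕ => ((C * q ^ 2) * (1/2 : ℝ) ^ N) * (1/2 : ℝ) ^ n) :=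
    (summable_geometric_of_lt_one (by norm_num) (by norm_num)).mul_left _
  rw [← summable_nat_add_iff N]
  refine Summable.of_nonneg_of_le (fun n => hnn _) (fun n => ?_) hs
  rcases key (n + N) with hb | hlt
  · calc y ^ (n + N) / Real.Gamma (a * ↑(n + N) + c) ≤ (C * q ^ 2) * (1/2 : ℝ) ^ (n + N) := hb
      _ = ((C * q ^ 2) * (1/2 : ℝ) ^ N) * (1/2 : ℝ) ^ n := by rw [pow_add]; ring
  · omega

end SonineAux

open SonineAux

theorem stmt_7 (α β : ℝ) (hα : 0 < α) (hαβ : α < β) (hβ : β < 1)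
    (k l : ℝ → ℝ)
    (hk : ∀ t : ℝ, k t = g (1 - β + α) t + g (1 - β) t)
    (hl : ∀ t : ℝ, l t = t ^ (β - 1) * mittagLeffler α β (-(t ^ α))) :
    ∀ t ∈ Ioi (0:ℝ), lconv k l t = 1 := by
  intro t ht'
  have ht : 0 < t := ht'
  have hβ0 : 0 < β := hα.trans hαβ
  have h1 : 0 < 1 - β + α := by linarith
  have h2 : 0 < 1 - β := by linarith
  set y := t ^ α with hydef
  have hy0 : 0 < y := Real.rpow_pos_of_pos ht α
  have hβn : ∀ n : ℕ, (0:ℝ) < α * n + β := fun n => by positivity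
  set F : ℕ → ℝ → ℝ :=
    fun n τ => k (t - τ) * ((-1) ^ n * (τ ^ (α * n + β - 1) / Real.Gamma (α * n + β)))
    with hFdef
  -- rewrite the basic integrand as a sum of two g-convolutions
  have hfun : ∀ n : ℕ,
      (fun τ : ℝ => k (t - τ) * (τ ^ (α * n + β - 1) / Real.Gamma (α * n + β)))
        = fun τ : ℝ => g (1 - β + α) (t - τ) * g (α * n + β) τ
            + g (1 - β) (t - τ) * g (α * n + β) τ := by
    intro n
    funext τ
    rw [hk (t - τ)]
    simp only [g]
    ring
  have hconv : ∀ n : ℕ,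
      (∫ τ in (0:ℝ)..t, k (t - τ) * (τ ^ (α * n + β - 1) / Real.Gamma (α * n + β)))
        = g (α * n + α + 1) t + g (α * n + 1) t := by
    intro n
    rw [hfun n,
      intervalIntegral.integral_add (g_conv_int h1 (hβn n) ht) (g_conv_int h2 (hβn n) ht),
      g_conv h1 (hβn n) ht, g_conv h2 (hβn n) ht]
    have e1 : 1 - β + α + (α * (n:ℝ) + β) = α * n + α + 1 := by ring
    have e2 : 1 - β + (α * (n:ℝ) + β) = α * n + 1 := by ring
    rw [e1, e2]
  have hint : ∀ n : ℕ, IntervalIntegrable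
      (fun τ : ℝ => k (t - τ) * (τ ^ (α * n + β - 1) / Real.Gamma (α * n + β))) volume 0 t := by
    intro n
    rw [hfun n]
    exact (g_conv_int h1 (hβn n) ht).add (g_conv_int h2 (hβn n) ht)
  have hFeq : ∀ n : ℕ, F n = fun τ : ℝ =>
      (-1:ℝ) ^ n * (k (t - τ) * (τ ^ (α * n + β - 1) / Real.Gamma (α * n + β))) := by
    intro n; funext τ; simp only [hFdef]; ring
  have hFint : ∀ n : ℕ, IntegrableOn (F n) (Ioc 0 t) volume := by
    intro n
    rw [← intervalIntegrable_iff_integrableOn_Ioc_of_le ht.le, hFeq n]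
    exact (hint n).const_mul _
  set c : ℕ → ℝ := fun n => g (α * n + α + 1) t + g (α * n + 1) t with hcdef
  have hgt : ∀ (n : ℕ) (d : ℝ), g (α * n + d) t = t ^ (d - 1) * y ^ n / Real.Gamma (α * n + d) := by
    intro n d
    rw [g]
    congr 1
    rw [show α * (n:ℝ) + d - 1 = α * (n:ℝ) + (d - 1) from by ring, Real.rpow_add ht,
      Real.rpow_mul ht.le, Real.rpow_natCast, ← hydef]
    ring
  have hc1 : ∀ n : ℕ, c n = y * (y ^ n / Real.Gamma (α * n + (α + 1)))
      + y ^ n / Real.Gamma (α * n + 1) := by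
    intro n
    simp only [hcdef]
    rw [show α * (n:ℝ) + α + 1 = α * n + (α + 1) from by ring, hgt n (α + 1), hgt n 1,
      show (α + 1 - 1 : ℝ) = α from by ring, sub_self, Real.rpow_zero, ← hydef]
    ring
  have hcnn : ∀ n : ℕ, 0 ≤ c n := by
    intro n
    simp only [hcdef, g]
    have p1 : (0:ℝ) < α * n + α + 1 := by positivity
    have p2 : (0:ℝ) < α * n + 1 := by positivity
    exact add_nonneg
      (div_nonneg (Real.rpow_nonneg ht.le _) (Real.Gamma_pos_of_pos p1).le)
      (div_nonneg (Real.rpow_nonneg ht.le _) (Real.Gamma_pos_of_pos p2).le)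
  have hcsum : Summable c := by
    have s1 := (summable_gamma_aux hα (by linarith : (1:ℝ) ≤ α + 1) hy0.le).mul_left y
    have s2 := summable_gamma_aux hα le_rfl hy0.le
    exact (s1.add s2).congr fun n => (hc1 n).symm
  -- pointwise expansion
  have hpt : EqOn (fun τ : ℝ => k (t - τ) * l τ) (fun τ : ℝ => ∑' n, F n τ) (Ioc 0 t) := by
    intro τ hτ
    have hτ0 : 0 < τ := hτ.1
    show k (t - τ) * l τ = ∑' n, F n τ
    rw [hl τ, mittagLeffler, ← tsum_mul_left, ← tsum_mul_left]
    refine tsum_congr fun n => ?_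
    have h3 : (-(τ ^ α)) ^ n = (-1:ℝ) ^ n * τ ^ (α * (n:ℝ)) := by
      rw [neg_pow, ← Real.rpow_natCast (τ ^ α) n, ← Real.rpow_mul hτ0.le]
    have h4 : (τ:ℝ) ^ (α * (n:ℝ) + β - 1) = τ ^ (β - 1) * τ ^ (α * (n:ℝ)) := by
      rw [show α * (n:ℝ) + β - 1 = (β - 1) + α * n from by ring, Real.rpow_add hτ0]
    simp only [hFdef]
    rw [h3, h4]
    ring
  -- norms of the terms
  have hknn : ∀ τ : ℝ, τ ≤ t → 0 ≤ k (t - τ) := by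
    intro τ hτ
    rw [hk (t - τ)]
    simp only [g]
    have h0 : (0:ℝ) ≤ t - τ := by linarith
    exact add_nonneg
      (div_nonneg (Real.rpow_nonneg h0 _) (Real.Gamma_pos_of_pos h1).le)
      (div_nonneg (Real.rpow_nonneg h0 _) (Real.Gamma_pos_of_pos h2).le)
  have hIoc : ∀ n : ℕ, ∫ τ in Ioc 0 t,
      k (t - τ) * (τ ^ (α * n + β - 1) / Real.Gamma (α * n + β)) = c n := by
    intro n
    rw [← intervalIntegral.integral_of_le ht.le, hconv n, hcdef]
  have hFnorm : ∀ n : ℕ, ∫ τ in Ioc 0 t, ‖F n τ‖ = c n := by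
    intro n
    rw [← hIoc n]
    apply setIntegral_congr_fun measurableSet_Ioc
    intro τ hτ
    have hτ0 : 0 < τ := hτ.1
    have hone : |(-1:ℝ) ^ n| = 1 := by rw [abs_pow, abs_neg, abs_one, one_pow]
    show ‖F n τ‖ = _
    simp only [hFdef, Real.norm_eq_abs, abs_mul]
    rw [hone, one_mul, abs_of_nonneg (hknn τ hτ.2),
      abs_of_nonneg (div_nonneg (Real.rpow_nonneg hτ0.le _) (Real.Gamma_pos_of_pos (hβn n)).le)]
  have hlint : ∀ n : ℕ, (∫⁻ τ in Ioc 0 t, ‖F n τ‖₊) = ENNReal.ofReal (c n) := by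
    intro n
    have := ofReal_integral_norm_eq_lintegral_enorm (hFint n); rw [hFnorm n] at this; exact this.symm
  have hsum_ne : (∑' n : ℕ, ∫⁻ τ in Ioc 0 t, ‖F n τ‖₊) ≠ ⊤ := by
    rw [tsum_congr hlint, ← ENNReal.ofReal_tsum_of_nonneg hcnn hcsum]
    exact ENNReal.ofReal_ne_top
  have hmain : lconv k l t = ∑' n : ℕ, ∫ τ in Ioc 0 t, F n τ := by
    rw [lconv, intervalIntegral.integral_of_le ht.le,
      setIntegral_congr_fun measurableSet_Ioc hpt]
    exact integral_tsum (fun n => (hFint n).aestronglyMeasurable) hsum_ne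
  have hterm : ∀ n : ℕ, ∫ τ in Ioc 0 t, F n τ = (-1:ℝ) ^ n * c n := by
    intro n
    rw [← intervalIntegral.integral_of_le ht.le, hFeq n,
      intervalIntegral.integral_const_mul, hconv n, hcdef]
  -- telescoping
  set b : ℕ → ℝ := fun n => (-1:ℝ) ^ n * g (α * n + 1) t with hbdef
  have hgnn : ∀ n : ℕ, 0 ≤ g (α * n + 1) t := by
    intro n
    simp only [g]
    have : (0:ℝ) < α * n + 1 := by positivity
    exact div_nonneg (Real.rpow_nonneg ht.le _) (Real.Gamma_pos_of_pos this).le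
  have hb_abs : ∀ n : ℕ, |b n| = y ^ n / Real.Gamma (α * n + 1) := by
    intro n
    simp only [hbdef, abs_mul]
    rw [abs_pow, abs_neg, abs_one, one_pow, one_mul, abs_of_nonneg (hgnn n), hgt n 1,
      sub_self, Real.rpow_zero, one_mul]
  have hb_sum : Summable b := by
    apply Summable.of_abs
    exact (summable_gamma_aux hα le_rfl hy0.le).congr fun n => (hb_abs n).symm
  have hb1_sum : Summable (fun n : ℕ => b (n + 1)) := (summable_nat_add_iff 1).mpr hb_sum
  have hbrel : ∀ n : ℕ, (-1:ℝ) ^ n * g (α * n + α + 1) t = -(b (n + 1)) := by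
    intro n
    simp only [hbdef]
    have e : α * (((n + 1 : ℕ)):ℝ) + 1 = α * n + α + 1 := by push_cast; ring
    rw [e, pow_succ]
    ring
  have hb0 : b 0 = 1 := by
    simp only [hbdef, pow_zero, one_mul, Nat.cast_zero, mul_zero, zero_add, g, sub_self,
      Real.rpow_zero, Real.Gamma_one, div_one]
  rw [hmain]
  calc (∑' n : ℕ, ∫ τ in Ioc 0 t, F n τ) = ∑' n : ℕ, (-(b (n + 1)) + b n) := by
        refine tsum_congr fun n => ?_
        rw [hterm n]
        simp only [hcdef, hbdef]
        rw [mul_add, hbrel n]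
    _ = (∑' n : ℕ, -(b (n + 1))) + ∑' n : ℕ, b n := Summable.tsum_add hb1_sum.neg hb_sum
    _ = -(∑' n : ℕ, b (n + 1)) + (b 0 + ∑' n : ℕ, b (n + 1)) := by
        rw [tsum_neg, Summable.tsum_eq_zero_add hb_sum]
    _ = b 0 := by ring
    _ = 1 := hb0
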